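/- Fix ρ1 ∈ (0,1) and ρ2 ∈ (0,1−ρ1). On a probability space, let (a(k))_{k∈ℤ} and (s(k))_{k∈ℤ} be a mutually independent family of {0,1}-valued random variables with P(a(k)=1) = ρ1 and P(s(k)=1) = ρ1+ρ2 for all k. Fix z ∈ ℤ and let S be the event that site z carries a second class particle. Then, conditionally on S, the configuration to the left of z is independent of the configuration to the right of z: for every event E determined by the family (η(i))_{i<z} and every event F determined by the family (η(i))_{i>z}, one has P(E ∩ F ∩ S)·P(S) = P(E ∩ S)·P(F ∩ S). -/

import Mathlib

open MeasureTheory ProbabilityTheory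

/-- Site i carries a second class particle in the queueing construction. -/
def SecondClassAt {Ω : Type*} (a s : ℤ → Ω → ℝ) (i : ℤ) (ω : Ω) : Prop :=
  s i ω = 1 ∧ a i ω = 0 ∧ ∀ j : ℤ, i + 1 ≤ j →
    ∑ k ∈ Finset.Icc (i + 1) j, a k ω ≤ ∑ k ∈ Finset.Icc (i + 1) j, s k ω

/-- Site i carries a first class particle in the queueing construction. -/
def FirstClassAt {Ω : Type*} (a s : ℤ → Ω → ℝ) (i : ℤ) (ω : Ω) : Prop :=
  s i ω = 1 ∧ (a i ω = 1 ∨ ∃ j : ℤ, i + 1 ≤ j ∧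
    ∑ k ∈ Finset.Icc (i + 1) j, s k ω < ∑ k ∈ Finset.Icc (i + 1) j, a k ω)

open Classical in
/-- The particle configuration built from the queueing construction:
2 = second class particle, 1 = first class particle, 0 = hole. -/
noncomputable def etaConf {Ω : Type*} (a s : ℤ → Ω → ℝ) (i : ℤ) (ω : Ω) : ℕ :=
  if SecondClassAt a s i ω then 2 else if FirstClassAt a s i ω then 1 else 0

/-! ### Auxiliary definitions and lemmas -/

/-- Truncated version of `SecondClassAt` only looking at sites in `[i, z-1]`. -/
def SecondClassAt' {Ω : Type*} (a s : ℤ → Ω → ℝ) (z i : ℤ) (ω : Ω) : Prop :=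
  s i ω = 1 ∧ a i ω = 0 ∧ ∀ j ∈ Finset.Icc (i+1) (z-1),
    ∑ k ∈ Finset.Icc (i + 1) j, a k ω ≤ ∑ k ∈ Finset.Icc (i + 1) j, s k ω

/-- Truncated version of `FirstClassAt` only looking at sites in `[i, z-1]`. -/
def FirstClassAt' {Ω : Type*} (a s : ℤ → Ω → ℝ) (z i : ℤ) (ω : Ω) : Prop :=
  s i ω = 1 ∧ (a i ω = 1 ∨ ∃ j ∈ Finset.Icc (i+1) (z-1),
    ∑ k ∈ Finset.Icc (i + 1) j, s k ω < ∑ k ∈ Finset.Icc (i + 1) j, a k ω)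

open Classical in
/-- Truncated configuration. -/
noncomputable def etaConf' {Ω : Type*} (a s : ℤ → Ω → ℝ) (z i : ℤ) (ω : Ω) : ℕ :=
  if SecondClassAt' a s z i ω then 2 else if FirstClassAt' a s z i ω then 1 else 0

lemma Icc_succ_left' (i j : ℤ) : Finset.Icc (i+1) j = Finset.Ioc i j := by
  ext x; simp [Int.add_one_le_iff]

lemma sum_split (f : ℤ → ℝ) (i z j : ℤ) (hi : i < z) (hj : z ≤ j) :
    ∑ k ∈ Finset.Icc (i+1) j, f k
      = (∑ k ∈ Finset.Icc (i+1) (z-1), f k) + f z + ∑ k ∈ Finset.Icc (z+1) j, f k := by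
  rw [Icc_succ_left', Icc_succ_left', Icc_succ_left']
  have h1 : Finset.Ioc i j = Finset.Ioc i (z-1) ∪ Finset.Ioc (z-1) j :=
    (Finset.Ioc_union_Ioc_eq_Ioc (by omega) (by omega)).symm
  have h2 : Finset.Ioc (z-1) j = Finset.Ioc (z-1) z ∪ Finset.Ioc z j :=
    (Finset.Ioc_union_Ioc_eq_Ioc (by omega) hj).symm
  have h3 : Finset.Ioc (z-1) z = {z} := by ext x; simp; omega
  rw [h1, Finset.sum_union (by rw [Finset.disjoint_left]; intro x hx hx'; simp at hx hx'; omega),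
    h2, Finset.sum_union (by rw [Finset.disjoint_left]; intro x hx hx'; simp at hx hx'; omega),
    h3, Finset.sum_singleton, add_assoc]

section Pointwise
variable {Ω : Type*} {a s : ℤ → Ω → ℝ} {z i : ℤ} {ω : Ω}

lemma tail_le (hz : SecondClassAt a s z ω) {j : ℤ} (hj : z ≤ j) :
    ∑ k ∈ Finset.Icc (z+1) j, a k ω ≤ ∑ k ∈ Finset.Icc (z+1) j, s k ω := by
  rcases eq_or_lt_of_le hj with h | h
  · subst h; simp [Finset.Icc_eq_empty_of_lt (by omega : z > z - 1 + 1 - 1)]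
  · exact hz.2.2 j (by omega)

lemma second_iff (hz : SecondClassAt a s z ω) (hi : i < z) :
    SecondClassAt a s i ω ↔ SecondClassAt' a s z i ω := by
  constructor
  · rintro ⟨h1, h2, h3⟩
    exact ⟨h1, h2, fun j hj => h3 j (Finset.mem_Icc.mp hj).1⟩
  · rintro ⟨h1, h2, h3⟩
    refine ⟨h1, h2, fun j hj => ?_⟩
    rcases le_or_gt z j with hzj | hjz
    · rw [sum_split (fun k => a k ω) i z j hi hzj, sum_split (fun k => s k ω) i z j hi hzj,
        hz.1, hz.2.1]
      have hA1 : ∑ k ∈ Finset.Icc (i+1) (z-1), a k ω ≤ ∑ k ∈ Finset.Icc (i+1) (z-1), s k ω := by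
        rcases le_or_gt (i+1) (z-1) with h | h
        · exact h3 (z-1) (Finset.mem_Icc.mpr ⟨h, le_refl _⟩)
        · simp [Finset.Icc_eq_empty_of_lt h]
      have := tail_le hz hzj
      linarith
    · exact h3 j (Finset.mem_Icc.mpr ⟨hj, by omega⟩)

lemma first_iff (hz : SecondClassAt a s z ω) (hi : i < z) :
    FirstClassAt a s i ω ↔ FirstClassAt' a s z i ω := by
  constructor
  · rintro ⟨h1, h2⟩
    refine ⟨h1, ?_⟩
    rcases h2 with h2 | ⟨j, hj, hlt⟩
    · exact Or.inl h2
    rcases le_or_gt z j with hzj | hjz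
    · right
      rw [sum_split (fun k => a k ω) i z j hi hzj, sum_split (fun k => s k ω) i z j hi hzj,
        hz.1, hz.2.1] at hlt
      have htail := tail_le hz hzj
      refine ⟨z-1, Finset.mem_Icc.mpr ⟨?_, le_refl _⟩, by linarith⟩
      by_contra h
      have he : Finset.Icc (i+1) (z-1) = ∅ := Finset.Icc_eq_empty_of_lt (by omega)
      rw [he] at hlt
      simp at hlt
      linarith
    · exact Or.inr ⟨j, Finset.mem_Icc.mpr ⟨hj, by omega⟩, hlt⟩
  · rintro ⟨h1, h2⟩
    refine ⟨h1, ?_⟩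
    rcases h2 with h2 | ⟨j, hj, hlt⟩
    · exact Or.inl h2
    · exact Or.inr ⟨j, (Finset.mem_Icc.mp hj).1, hlt⟩

lemma eta_eq (hz : SecondClassAt a s z ω) (hi : i < z) :
    etaConf a s i ω = etaConf' a s z i ω := by
  classical
  unfold etaConf etaConf'
  by_cases h2 : SecondClassAt a s i ω
  · simp [h2, (second_iff hz hi).mp h2]
  · have h2' : ¬ SecondClassAt' a s z i ω := fun h => h2 ((second_iff hz hi).mpr h)
    by_cases h1 : FirstClassAt a s i ω
    · simp [h2, h2', h1, (first_iff hz hi).mp h1]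
    · have h1' : ¬ FirstClassAt' a s z i ω := fun h => h1 ((first_iff hz hi).mpr h)
      simp [h2, h2', h1, h1']

end Pointwise

/-! ### σ-algebras generated by the variables at various sets of sites -/

/-- σ-algebra generated by a single variable indexed by `ℤ ⊕ ℤ`. -/
def sigOf {Ω : Type*} (a s : ℤ → Ω → ℝ) (x : ℤ ⊕ ℤ) : MeasurableSpace Ω :=
  MeasurableSpace.comap (Sum.elim a s x) inferInstance

/-- The site of an index. -/
def idxZ : ℤ ⊕ ℤ → ℤ := Sum.elim id id

/-- σ-algebra of the sites to the left of `z`. -/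
def sigL {Ω : Type*} (a s : ℤ → Ω → ℝ) (z : ℤ) : MeasurableSpace Ω :=
  ⨆ x ∈ {x | idxZ x < z}, sigOf a s x

/-- σ-algebra of the site `z`. -/
def sigM {Ω : Type*} (a s : ℤ → Ω → ℝ) (z : ℤ) : MeasurableSpace Ω :=
  ⨆ x ∈ {x | idxZ x = z}, sigOf a s x

/-- σ-algebra of the sites to the right of `z`. -/
def sigR {Ω : Type*} (a s : ℤ → Ω → ℝ) (z : ℤ) : MeasurableSpace Ω :=
  ⨆ x ∈ {x | z < idxZ x}, sigOf a s x

/-- The σ-algebra of sets which agree, within `S`, with an `L`-measurable set. -/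
def relMeas {Ω : Type*} (L : MeasurableSpace Ω) (S : Set Ω) : MeasurableSpace Ω where
  MeasurableSet' e := ∃ e', MeasurableSet[L] e' ∧ e ∩ S = e' ∩ S
  measurableSet_empty := ⟨∅, MeasurableSet.empty, by simp⟩
  measurableSet_compl := by
    rintro e ⟨e', he', heq⟩
    refine ⟨e'ᶜ, he'.compl, ?_⟩
    ext ω
    constructor
    · rintro ⟨h1, h2⟩
      refine ⟨fun hc => h1 ?_, h2⟩
      have := Set.ext_iff.mp heq ω
      simp [h2] at this
      exact this.mpr hc
    · rintro ⟨h1, h2⟩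
      refine ⟨fun hc => h1 ?_, h2⟩
      have := Set.ext_iff.mp heq ω
      simp [h2] at this
      exact this.mp hc
  measurableSet_iUnion := by
    intro f hf
    choose e' he' heq using hf
    refine ⟨⋃ n, e' n, MeasurableSet.iUnion he', ?_⟩
    rw [Set.iUnion_inter, Set.iUnion_inter]
    exact Set.iUnion_congr heq

/-- Conditioned on a second class particle at site z, the configuration to the
left of z and the configuration to the right of z are independent. -/
theorem independence_given_second_class_particle
    {Ω : Type*} [MeasureSpace Ω] [IsProbabilityMeasure (volume : Measure Ω)]
    (ρ1 ρ2 : ℝ) (h1 : ρ1 ∈ Set.Ioo (0:ℝ) 1) (h2 : ρ2 ∈ Set.Ioo (0:ℝ) (1 - ρ1))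
    (a s : ℤ → Ω → ℝ)
    (hma : ∀ k, Measurable (a k)) (hms : ∀ k, Measurable (s k))
    (hva : ∀ k ω, a k ω = 0 ∨ a k ω = 1) (hvs : ∀ k ω, s k ω = 0 ∨ s k ω = 1)
    (hindep : iIndepFun (m := fun _ : ℤ ⊕ ℤ => (inferInstance : MeasurableSpace ℝ))
      (Sum.elim a s) volume)
    (hpa : ∀ k, volume {ω | a k ω = 1} = ENNReal.ofReal ρ1)
    (hps : ∀ k, volume {ω | s k ω = 1} = ENNReal.ofReal (ρ1 + ρ2))
    (z : ℤ) (E F : Set Ω)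
    (hE : MeasurableSet[⨆ i : {i : ℤ // i < z},
      MeasurableSpace.comap (etaConf a s i.1) inferInstance] E)
    (hF : MeasurableSet[⨆ i : {i : ℤ // z < i},
      MeasurableSpace.comap (etaConf a s i.1) inferInstance] F) :
    volume (E ∩ F ∩ {ω | SecondClassAt a s z ω}) * volume {ω | SecondClassAt a s z ω}
      = volume (E ∩ {ω | SecondClassAt a s z ω})
        * volume (F ∩ {ω | SecondClassAt a s z ω}) := by
  classical
  set μ : Measure Ω := volume
  set S : Set Ω := {ω | SecondClassAt a s z ω} with hSdef
  have h_le : ∀ x, sigOf a s x ≤ (inferInstance : MeasurableSpace Ω) := by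
    rintro (k | k)
    · exact (hma k).comap_le
    · exact (hms k).comap_le
  have hiI : iIndep (sigOf a s) μ := hindep.iIndep
  -- basic measurability of individual variables
  have hmaL : ∀ k, k < z → Measurable[sigL a s z] (a k) := fun k hk =>
    measurable_iff_comap_le.mpr
      (le_biSup (sigOf a s) (show (Sum.inl k : ℤ ⊕ ℤ) ∈ {x | idxZ x < z} from hk))
  have hmsL : ∀ k, k < z → Measurable[sigL a s z] (s k) := fun k hk =>
    measurable_iff_comap_le.mpr
      (le_biSup (sigOf a s) (show (Sum.inr k : ℤ ⊕ ℤ) ∈ {x | idxZ x < z} from hk))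
  have hmaR : ∀ k, z < k → Measurable[sigR a s z] (a k) := fun k hk =>
    measurable_iff_comap_le.mpr
      (le_biSup (sigOf a s) (show (Sum.inl k : ℤ ⊕ ℤ) ∈ {x | z < idxZ x} from hk))
  have hmsR : ∀ k, z < k → Measurable[sigR a s z] (s k) := fun k hk =>
    measurable_iff_comap_le.mpr
      (le_biSup (sigOf a s) (show (Sum.inr k : ℤ ⊕ ℤ) ∈ {x | z < idxZ x} from hk))
  have hmaM : Measurable[sigM a s z] (a z) :=
    measurable_iff_comap_le.mpr
      (le_biSup (sigOf a s) (show (Sum.inl z : ℤ ⊕ ℤ) ∈ {x | idxZ x = z} from rfl))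
  have hmsM : Measurable[sigM a s z] (s z) :=
    measurable_iff_comap_le.mpr
      (le_biSup (sigOf a s) (show (Sum.inr z : ℤ ⊕ ℤ) ∈ {x | idxZ x = z} from rfl))
  -- measurability of partial sums
  have hsumL : ∀ (f : ℤ → Ω → ℝ), (∀ k, k < z → Measurable[sigL a s z] (f k)) →
      ∀ p q : ℤ, q < z → Measurable[sigL a s z] (fun ω => ∑ k ∈ Finset.Icc p q, f k ω) := by
    intro f hf p q hq
    apply Finset.measurable_sum
    intro k hk
    exact hf k (lt_of_le_of_lt (Finset.mem_Icc.mp hk).2 hq)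
  have hsumR : ∀ (f : ℤ → Ω → ℝ), (∀ k, z < k → Measurable[sigR a s z] (f k)) →
      ∀ p q : ℤ, z < p → Measurable[sigR a s z] (fun ω => ∑ k ∈ Finset.Icc p q, f k ω) := by
    intro f hf p q hp
    apply Finset.measurable_sum
    intro k hk
    exact hf k (lt_of_lt_of_le hp (Finset.mem_Icc.mp hk).1)
  -- the truncated configuration is measurable w.r.t. the left σ-algebra
  have hetaL : ∀ i : ℤ, i < z → Measurable[sigL a s z] (etaConf' a s z i) := by
    intro i hi
    have hS2 : MeasurableSet[sigL a s z] {ω | SecondClassAt' a s z i ω} := by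
      have heq : {ω | SecondClassAt' a s z i ω}
          = (s i ⁻¹' {1}) ∩ ((a i ⁻¹' {0}) ∩ ⋂ j : ℤ, {ω | j ∈ Finset.Icc (i+1) (z-1) →
              ∑ k ∈ Finset.Icc (i + 1) j, a k ω ≤ ∑ k ∈ Finset.Icc (i + 1) j, s k ω}) := by
        ext ω
        simp [SecondClassAt', Set.mem_iInter]
      rw [heq]
      refine ((hmsL i hi) (measurableSet_singleton 1)).inter
        (((hmaL i hi) (measurableSet_singleton 0)).inter (MeasurableSet.iInter fun j => ?_))
      by_cases hj : j ∈ Finset.Icc (i+1) (z-1)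
      · have hjz : j < z := by have := (Finset.mem_Icc.mp hj).2; omega
        have heq2 : {ω : Ω | j ∈ Finset.Icc (i+1) (z-1) →
            ∑ k ∈ Finset.Icc (i + 1) j, a k ω ≤ ∑ k ∈ Finset.Icc (i + 1) j, s k ω}
            = {ω : Ω | ∑ k ∈ Finset.Icc (i + 1) j, a k ω ≤ ∑ k ∈ Finset.Icc (i + 1) j, s k ω} := by
          ext ω; simp [hj]
        rw [heq2]
        exact measurableSet_le (hsumL a hmaL _ _ hjz) (hsumL s hmsL _ _ hjz)
      · have heq2 : {ω : Ω | j ∈ Finset.Icc (i+1) (z-1) →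
            ∑ k ∈ Finset.Icc (i + 1) j, a k ω ≤ ∑ k ∈ Finset.Icc (i + 1) j, s k ω} = Set.univ := by
          ext ω; simp [hj]
        rw [heq2]; exact @MeasurableSet.univ Ω _
    have hF1 : MeasurableSet[sigL a s z] {ω | FirstClassAt' a s z i ω} := by
      have heq : {ω | FirstClassAt' a s z i ω}
          = (s i ⁻¹' {1}) ∩ ((a i ⁻¹' {1}) ∪ ⋃ j : ℤ, {ω | j ∈ Finset.Icc (i+1) (z-1) ∧
              ∑ k ∈ Finset.Icc (i + 1) j, s k ω < ∑ k ∈ Finset.Icc (i + 1) j, a k ω}) := by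
        ext ω
        simp [FirstClassAt', Set.mem_iUnion]
      rw [heq]
      refine ((hmsL i hi) (measurableSet_singleton 1)).inter
        (((hmaL i hi) (measurableSet_singleton 1)).union (MeasurableSet.iUnion fun j => ?_))
      by_cases hj : j ∈ Finset.Icc (i+1) (z-1)
      · have hjz : j < z := by have := (Finset.mem_Icc.mp hj).2; omega
        have heq2 : {ω : Ω | j ∈ Finset.Icc (i+1) (z-1) ∧
            ∑ k ∈ Finset.Icc (i + 1) j, s k ω < ∑ k ∈ Finset.Icc (i + 1) j, a k ω}
            = {ω : Ω | ∑ k ∈ Finset.Icc (i + 1) j, s k ω < ∑ k ∈ Finset.Icc (i + 1) j, a k ω} := by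
          ext ω; simp [hj]
        rw [heq2]
        exact measurableSet_lt (hsumL s hmsL _ _ hjz) (hsumL a hmaL _ _ hjz)
      · have heq2 : {ω : Ω | j ∈ Finset.Icc (i+1) (z-1) ∧
            ∑ k ∈ Finset.Icc (i + 1) j, s k ω < ∑ k ∈ Finset.Icc (i + 1) j, a k ω} = ∅ := by
          ext ω; simp [hj]
        rw [heq2]; exact @MeasurableSet.empty Ω (sigL a s z)
    unfold etaConf'
    exact Measurable.ite hS2 measurable_const (Measurable.ite hF1 measurable_const measurable_const)
  -- the true configuration at i > z is measurable w.r.t. the right σ-algebra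
  have hetaR : ∀ i : ℤ, z < i → Measurable[sigR a s z] (etaConf a s i) := by
    intro i hi
    have hS2 : MeasurableSet[sigR a s z] {ω | SecondClassAt a s i ω} := by
      have heq : {ω | SecondClassAt a s i ω}
          = (s i ⁻¹' {1}) ∩ ((a i ⁻¹' {0}) ∩ ⋂ j : ℤ, {ω | i + 1 ≤ j →
              ∑ k ∈ Finset.Icc (i + 1) j, a k ω ≤ ∑ k ∈ Finset.Icc (i + 1) j, s k ω}) := by
        ext ω
        simp [SecondClassAt, Set.mem_iInter]
      rw [heq]
      refine ((hmsR i hi) (measurableSet_singleton 1)).inter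
        (((hmaR i hi) (measurableSet_singleton 0)).inter (MeasurableSet.iInter fun j => ?_))
      by_cases hj : i + 1 ≤ j
      · have heq2 : {ω : Ω | i + 1 ≤ j →
            ∑ k ∈ Finset.Icc (i + 1) j, a k ω ≤ ∑ k ∈ Finset.Icc (i + 1) j, s k ω}
            = {ω : Ω | ∑ k ∈ Finset.Icc (i + 1) j, a k ω ≤ ∑ k ∈ Finset.Icc (i + 1) j, s k ω} := by
          ext ω; simp [hj]
        rw [heq2]
        exact measurableSet_le (hsumR a hmaR _ _ (by omega)) (hsumR s hmsR _ _ (by omega))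
      · have heq2 : {ω : Ω | i + 1 ≤ j →
            ∑ k ∈ Finset.Icc (i + 1) j, a k ω ≤ ∑ k ∈ Finset.Icc (i + 1) j, s k ω} = Set.univ := by
          ext ω; simp [hj]
        rw [heq2]; exact @MeasurableSet.univ Ω _
    have hF1 : MeasurableSet[sigR a s z] {ω | FirstClassAt a s i ω} := by
      have heq : {ω | FirstClassAt a s i ω}
          = (s i ⁻¹' {1}) ∩ ((a i ⁻¹' {1}) ∪ ⋃ j : ℤ, {ω | i + 1 ≤ j ∧
              ∑ k ∈ Finset.Icc (i + 1) j, s k ω < ∑ k ∈ Finset.Icc (i + 1) j, a k ω}) := by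
        ext ω
        simp [FirstClassAt, Set.mem_iUnion]
      rw [heq]
      refine ((hmsR i hi) (measurableSet_singleton 1)).inter
        (((hmaR i hi) (measurableSet_singleton 1)).union (MeasurableSet.iUnion fun j => ?_))
      by_cases hj : i + 1 ≤ j
      · have heq2 : {ω : Ω | i + 1 ≤ j ∧
            ∑ k ∈ Finset.Icc (i + 1) j, s k ω < ∑ k ∈ Finset.Icc (i + 1) j, a k ω}
            = {ω : Ω | ∑ k ∈ Finset.Icc (i + 1) j, s k ω < ∑ k ∈ Finset.Icc (i + 1) j, a k ω} := by
          ext ω; simp [hj]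
        rw [heq2]
        exact measurableSet_lt (hsumR s hmsR _ _ (by omega)) (hsumR a hmaR _ _ (by omega))
      · have heq2 : {ω : Ω | i + 1 ≤ j ∧
            ∑ k ∈ Finset.Icc (i + 1) j, s k ω < ∑ k ∈ Finset.Icc (i + 1) j, a k ω} = ∅ := by
          ext ω; simp [hj]
        rw [heq2]; exact @MeasurableSet.empty Ω (sigR a s z)
    unfold etaConf
    exact Measurable.ite hS2 measurable_const (Measurable.ite hF1 measurable_const measurable_const)
  -- decomposition of S
  set Z : Set Ω := (s z ⁻¹' {1}) ∩ (a z ⁻¹' {0}) with hZdef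
  set R : Set Ω := ⋂ j : ℤ, {ω | z + 1 ≤ j →
      ∑ k ∈ Finset.Icc (z + 1) j, a k ω ≤ ∑ k ∈ Finset.Icc (z + 1) j, s k ω} with hRsetdef
  have hSZR : S = Z ∩ R := by
    ext ω
    simp only [hSdef, hZdef, hRsetdef, Set.mem_setOf_eq, Set.mem_inter_iff, Set.mem_iInter,
      Set.mem_preimage, Set.mem_singleton_iff, SecondClassAt]
    tauto
  have hZM : MeasurableSet[sigM a s z] Z :=
    (hmsM (measurableSet_singleton 1)).inter (hmaM (measurableSet_singleton 0))
  have hRR : MeasurableSet[sigR a s z] R := by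
    refine MeasurableSet.iInter fun j => ?_
    by_cases hj : z + 1 ≤ j
    · have heq2 : {ω : Ω | z + 1 ≤ j →
          ∑ k ∈ Finset.Icc (z + 1) j, a k ω ≤ ∑ k ∈ Finset.Icc (z + 1) j, s k ω}
          = {ω : Ω | ∑ k ∈ Finset.Icc (z + 1) j, a k ω ≤ ∑ k ∈ Finset.Icc (z + 1) j, s k ω} := by
        ext ω; simp [hj]
      rw [heq2]
      exact measurableSet_le (hsumR a hmaR _ _ (by omega)) (hsumR s hmsR _ _ (by omega))
    · have heq2 : {ω : Ω | z + 1 ≤ j →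
          ∑ k ∈ Finset.Icc (z + 1) j, a k ω ≤ ∑ k ∈ Finset.Icc (z + 1) j, s k ω} = Set.univ := by
        ext ω; simp [hj]
      rw [heq2]; exact @MeasurableSet.univ Ω _
  -- F is measurable w.r.t. the right σ-algebra
  have hFR : MeasurableSet[sigR a s z] F := by
    have hle : (⨆ i : {i : ℤ // z < i},
        MeasurableSpace.comap (etaConf a s i.1) inferInstance) ≤ sigR a s z :=
      iSup_le fun i => measurable_iff_comap_le.mp (hetaR i.1 i.2)
    exact hle _ hF
  -- E coincides with a left-measurable set on S
  have hE2 : ∃ E' : Set Ω, MeasurableSet[sigL a s z] E' ∧ E ∩ S = E' ∩ S := by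
    have hle : (⨆ i : {i : ℤ // i < z},
        MeasurableSpace.comap (etaConf a s i.1) inferInstance) ≤ relMeas (sigL a s z) S := by
      refine iSup_le fun i => ?_
      rintro e ⟨B, hB, rfl⟩
      refine ⟨etaConf' a s z i.1 ⁻¹' B, hetaL i.1 i.2 hB, ?_⟩
      ext ω
      simp only [Set.mem_inter_iff, Set.mem_preimage]
      constructor
      · rintro ⟨hb1, hb2⟩
        exact ⟨by rwa [← eta_eq hb2 i.2], hb2⟩
      · rintro ⟨hb1, hb2⟩
        exact ⟨by rwa [eta_eq hb2 i.2], hb2⟩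
    exact hle _ hE
  obtain ⟨E', hE'meas, hEeq⟩ := hE2
  -- independence
  have indepL : Indep (sigL a s z) (⨆ x ∈ {x | idxZ x < z}ᶜ, sigOf a s x) μ :=
    indep_biSup_compl h_le hiI _
  have indepM : Indep (sigM a s z) (⨆ x ∈ {x | idxZ x = z}ᶜ, sigOf a s x) μ :=
    indep_biSup_compl h_le hiI _
  have hRleLc : sigR a s z ≤ ⨆ x ∈ {x | idxZ x < z}ᶜ, sigOf a s x := by
    refine iSup₂_le fun x hx => ?_
    have hx' : x ∈ {x | idxZ x < z}ᶜ := by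
      simp only [Set.mem_compl_iff, Set.mem_setOf_eq] at hx ⊢
      omega
    exact le_biSup (sigOf a s) hx'
  have hMleLc : sigM a s z ≤ ⨆ x ∈ {x | idxZ x < z}ᶜ, sigOf a s x := by
    refine iSup₂_le fun x hx => ?_
    have hx' : x ∈ {x | idxZ x < z}ᶜ := by
      simp only [Set.mem_compl_iff, Set.mem_setOf_eq] at hx ⊢
      omega
    exact le_biSup (sigOf a s) hx'
  have hRleMc : sigR a s z ≤ ⨆ x ∈ {x | idxZ x = z}ᶜ, sigOf a s x := by
    refine iSup₂_le fun x hx => ?_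
    have hx' : x ∈ {x | idxZ x = z}ᶜ := by
      simp only [Set.mem_compl_iff, Set.mem_setOf_eq] at hx ⊢
      omega
    exact le_biSup (sigOf a s) hx'
  have indepLR : ∀ t : Set Ω, MeasurableSet[sigR a s z] t →
      μ (E' ∩ (Z ∩ t)) = μ E' * μ (Z ∩ t) := by
    intro t ht
    exact (Indep_iff _ _ _).mp indepL E' (Z ∩ t) hE'meas ((hMleLc _ hZM).inter (hRleLc _ ht))
  have indepMR : ∀ t : Set Ω, MeasurableSet[sigR a s z] t → μ (Z ∩ t) = μ Z * μ t := by
    intro t ht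
    exact (Indep_iff _ _ _).mp indepM Z t hZM (hRleMc _ ht)
  -- final computation
  have e1 : μ (E ∩ F ∩ S) = μ E' * (μ Z * μ (R ∩ F)) := by
    have heq : E ∩ F ∩ S = E' ∩ (Z ∩ (R ∩ F)) := by
      have h0 : E ∩ F ∩ S = (E ∩ S) ∩ (F ∩ S) := by
        ext ω; simp only [Set.mem_inter_iff]; tauto
      rw [h0, hEeq, hSZR]
      ext ω; simp only [Set.mem_inter_iff]; tauto
    rw [heq, indepLR _ (hRR.inter hFR), indepMR _ (hRR.inter hFR)]
  have e2 : μ S = μ Z * μ R := by rw [hSZR, indepMR _ hRR]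
  have e3 : μ (E ∩ S) = μ E' * (μ Z * μ R) := by
    have heq : E ∩ S = E' ∩ (Z ∩ R) := by rw [hEeq, hSZR]
    rw [heq, indepLR _ hRR, indepMR _ hRR]
  have e4 : μ (F ∩ S) = μ Z * μ (R ∩ F) := by
    have heq : F ∩ S = Z ∩ (R ∩ F) := by
      rw [hSZR]; ext ω; simp only [Set.mem_inter_iff]; tauto
    rw [heq, indepMR _ (hRR.inter hFR)]
  rw [e1, e2, e3, e4]
  ring
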